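/- arXiv:0911.4254 — 2 statements merged into one kernel-verified Lean document; each statement's English description precedes it below -/
import Mathlib

section
/- Let n ≥ 1 and p ∈ (0,1) with p > 1 − (2n+2)^{−2}. For i.i.d. site percolation on ℤ^{n+1} with parameter p, almost surely there exists a random function L : ℤⁿ → ℕ such that (i) for each x ∈ ℤⁿ the site (x, L(x)) is open, and (ii) |L(x) − L(y)| ≤ 1 whenever ‖x − y‖₁ = 1. -/
open MeasureTheory ProbabilityTheory

namespace LipPerc

variable {n : ℕ}

abbrev Pt (n : ℕ) := Fin n → ℤ
abbrev Site (n : ℕ) := Pt n × ℤ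

abbrev Step (n : ℕ) := Option (Fin n × Bool)

/-- the unit vector for a step direction -/
def eVec (d : Fin n × Bool) : Pt n := fun j => if j = d.1 then (if d.2 then 1 else -1) else 0

def run (x : Pt n) (k : ℤ) : List (Step n) → Site n
  | [] => (x, k)
  | none :: s => run x (k - 1) s
  | some d :: s => run (x + eVec d) (k + 1) s

def downs (x : Pt n) (k : ℤ) : List (Step n) → List (Site n)
  | [] => []
  | none :: s => (x, k) :: downs x (k - 1) s
  | some d :: s => downs (x + eVec d) (k + 1) s

inductive Reach (o : Site n → Bool) : Pt n → ℤ → Prop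
  | base (x : Pt n) (k : ℤ) : k ≤ 0 → Reach o x k
  | down (x : Pt n) (k : ℤ) : o (x, k) = false → Reach o x (k - 1) → Reach o x k
  | up (x y : Pt n) (k : ℤ) : (∑ i, ((y i - x i).natAbs)) = 1 → Reach o y (k + 1) →
      Reach o x k

lemma dir_exists {u : Pt n} (h : ∑ i, (u i).natAbs = 1) : ∃ d : Fin n × Bool, eVec d = u := by
  have h1 : ∃ i, (u i).natAbs ≠ 0 := by
    by_contra hc
    push_neg at hc
    rw [Finset.sum_eq_zero (fun i _ => hc i)] at h
    exact one_ne_zero h.symm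
  obtain ⟨i, hi⟩ := h1
  have h2 : (u i).natAbs + ∑ j ∈ Finset.univ.erase i, (u j).natAbs = 1 := by
    rw [Finset.add_sum_erase Finset.univ (fun j => (u j).natAbs) (Finset.mem_univ i)]; exact h
  have h3 : ∑ j ∈ Finset.univ.erase i, (u j).natAbs = 0 := by omega
  have h4 : ∀ j, j ≠ i → u j = 0 := by
    intro j hj
    have := (Finset.sum_eq_zero_iff.1 h3) j (Finset.mem_erase.2 ⟨hj, Finset.mem_univ j⟩)
    omega
  have h5 : u i = 1 ∨ u i = -1 := by omega
  refine ⟨(i, decide (u i = 1)), funext fun j => ?_⟩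
  rcases eq_or_ne j i with rfl | hne
  · rcases h5 with h5 | h5 <;> simp [eVec, h5]
  · simp [eVec, hne, (h4 j hne).symm]

lemma run_append (x : Pt n) (k : ℤ) (a b : List (Step n)) :
    run x k (a ++ b) = run (run x k a).1 (run x k a).2 b := by
  induction a generalizing x k with
  | nil => rfl
  | cons hd tl ih => cases hd <;> simp [run, ih]

lemma downs_append (x : Pt n) (k : ℤ) (a b : List (Step n)) :
    downs x k (a ++ b) = downs x k a ++ downs (run x k a).1 (run x k a).2 b := by
  induction a generalizing x k with
  | nil => rfl
  | cons hd tl ih => cases hd <;> simp [run, downs, ih]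

lemma run_snd (x : Pt n) (k : ℤ) (s : List (Step n)) :
    (run x k s).2 = k + s.length - 2 * (downs x k s).length := by
  induction s generalizing x k with
  | nil => simp [run, downs]
  | cons hd tl ih =>
    cases hd <;> simp [run, downs, ih] <;> push_cast <;> ring

lemma reach_witness {o : Site n → Bool} {x : Pt n} {k : ℤ} (h : Reach o x k) :
    ∃ s : List (Step n), (run x k s).2 ≤ 0 ∧ ∀ z ∈ downs x k s, o z = false := by
  induction h with
  | base x k hk => exact ⟨[], hk, by simp [downs]⟩
  | down x k hcl _ ih =>
    obtain ⟨s, h1, h2⟩ := ih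
    refine ⟨none :: s, h1, ?_⟩
    intro z hz
    rcases List.mem_cons.1 hz with rfl | hz
    · exact hcl
    · exact h2 z hz
  | up x y k hnb _ ih =>
    obtain ⟨d, hd⟩ := dir_exists (u := fun i => y i - x i) (by simpa using hnb)
    have hxy : x + eVec d = y := by rw [hd]; funext j; simp
    obtain ⟨s, h1, h2⟩ := ih
    exact ⟨some d :: s, by rw [run, hxy]; exact h1, by rw [downs, hxy]; exact h2⟩

lemma mem_downs {z : Site n} {x : Pt n} {k : ℤ} {s : List (Step n)}
    (h : z ∈ downs x k s) :
    ∃ a b, s = a ++ none :: b ∧ run x k a = z := by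
  induction s generalizing x k with
  | nil => simp [downs] at h
  | cons hd tl ih =>
    cases hd with
    | none =>
      rcases List.mem_cons.1 h with rfl | h
      · exact ⟨[], tl, rfl, rfl⟩
      · obtain ⟨a, b, rfl, hrun⟩ := ih h
        exact ⟨none :: a, b, rfl, hrun⟩
    | some d =>
      obtain ⟨a, b, rfl, hrun⟩ := ih h
      exact ⟨some d :: a, b, rfl, hrun⟩

lemma cut_lemma {z : Site n} {x : Pt n} {k : ℤ} {s : List (Step n)}
    (h : List.Sublist [z, z] (downs x k s)) :
    ∃ a b, s = a ++ none :: b ∧ run x k a = z ∧ z ∈ downs z.1 (z.2 - 1) b := by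
  induction s generalizing x k with
  | nil =>
    rw [downs] at h
    exact absurd (List.sublist_nil.1 h) (by simp)
  | cons hd tl ih =>
    cases hd with
    | none =>
      rw [downs] at h
      cases h with
      | cons _ h =>
        obtain ⟨a, b, rfl, hrun, hmem⟩ := ih h
        exact ⟨none :: a, b, rfl, hrun, hmem⟩
      | cons_cons _ h =>
        exact ⟨[], tl, rfl, rfl, List.singleton_sublist.1 h⟩
    | some d =>
      rw [downs] at h
      obtain ⟨a, b, rfl, hrun, hmem⟩ := ih h
      exact ⟨some d :: a, b, rfl, hrun, hmem⟩

lemma exists_shorter {x : Pt n} {k : ℤ} {s : List (Step n)}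
    (hnd : ¬ (downs x k s).Nodup) :
    ∃ t : List (Step n), t.length < s.length ∧ run x k t = run x k s ∧
      ∀ z ∈ downs x k t, z ∈ downs x k s := by
  rw [List.nodup_iff_sublist] at hnd
  push_neg at hnd
  obtain ⟨z, hz⟩ := hnd
  obtain ⟨z1, z2⟩ := z
  obtain ⟨a, b, rfl, hrun, hmem⟩ := cut_lemma hz
  obtain ⟨b1, b2, rfl, hrun2⟩ := mem_downs hmem
  have e0 : ∀ c : List (Step n), run x k (a ++ none :: c) = run z1 (z2 - 1) c := by
    intro c; rw [run_append, hrun]; rfl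
  have e2 : ∀ c : List (Step n), downs x k (a ++ none :: c)
      = downs x k a ++ (z1, z2) :: downs z1 (z2 - 1) c := by
    intro c; rw [downs_append, hrun]; rfl
  have e3 : downs z1 (z2 - 1) (b1 ++ none :: b2)
      = downs z1 (z2 - 1) b1 ++ (z1, z2) :: downs z1 (z2 - 1) b2 := by
    rw [downs_append, hrun2]; rfl
  refine ⟨a ++ none :: b2, by simp, ?_, ?_⟩
  · rw [e0, e0, run_append, hrun2]; rfl
  · intro w hw
    rw [e2] at hw ⊢
    rw [e3]
    simp only [List.mem_append, List.mem_cons] at hw ⊢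
    tauto

lemma exists_nodup_witness {o : Site n → Bool} {x : Pt n} {k : ℤ} (h : Reach o x k) :
    ∃ s : List (Step n), (run x k s).2 ≤ 0 ∧ (downs x k s).Nodup ∧
      ∀ z ∈ downs x k s, o z = false := by
  obtain ⟨s, hfin, hval⟩ := reach_witness h
  clear h
  obtain ⟨N, hN⟩ : ∃ N, s.length ≤ N := ⟨s.length, le_rfl⟩
  induction N generalizing s with
  | zero =>
    by_cases hnd : (downs x k s).Nodup
    · exact ⟨s, hfin, hnd, hval⟩
    · obtain ⟨t, hlt, _, _⟩ := exists_shorter hnd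
      omega
  | succ N ih =>
    by_cases hnd : (downs x k s).Nodup
    · exact ⟨s, hfin, hnd, hval⟩
    · obtain ⟨t, hlt, hre, hsub⟩ := exists_shorter hnd
      exact ih t (hre ▸ hfin) (fun z hz => hval z (hsub z hz)) (by omega)

end LipPerc

open scoped ENNReal in
open LipPerc MeasureTheory ProbabilityTheory in
theorem stmt_9 {Ω : Type*} [MeasurableSpace Ω] (P : Measure Ω) [IsProbabilityMeasure P]
    (n : ℕ) (hn : 1 ≤ n) (p : ℝ) (hp : p ∈ Set.Ioo (0 : ℝ) 1)
    (hpc : 1 - ((2 * n + 2 : ℝ)) ^ (-2 : ℤ) < p)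
    -- i.i.d. site percolation on ℤ^{n+1}: `X z ω = true` iff the site `z` is open
    (X : ((Fin n → ℤ) × ℤ) → Ω → Bool) (hXmeas : ∀ z, Measurable (X z))
    (hindep : iIndepFun X P)
    (hdist : ∀ z, P {ω | X z ω = true} = ENNReal.ofReal p) :
    ∀ᵐ ω ∂P, ∃ L : (Fin n → ℤ) → ℕ,
      (∀ x : Fin n → ℤ, X (x, (L x : ℤ)) ω = true) ∧
      (∀ x y : Fin n → ℤ, (∑ i, (x i - y i).natAbs) = 1 →
        |(L x : ℤ) - (L y : ℤ)| ≤ 1) := by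
  classical
  obtain ⟨hp0, hp1⟩ := hp
  set q : ℝ := 1 - p with hqdef
  have hq0 : 0 < q := by simp only [hqdef]; linarith
  have hcpos : (0:ℝ) < 2 * n + 2 := by positivity
  have hqlt : q < ((2 * (n:ℝ) + 2))⁻¹ ^ 2 := by
    have h1 : ((2 * (n:ℝ) + 2)) ^ (-2 : ℤ) = ((2 * (n:ℝ) + 2))⁻¹ ^ 2 := by
      rw [zpow_neg, inv_pow]
      norm_cast
    rw [← h1]
    simp only [hqdef]
    linarith
  set sq : ℝ := Real.sqrt q with hsqdef
  have hsq0 : 0 ≤ sq := Real.sqrt_nonneg q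
  have hsqq : sq * sq = q := Real.mul_self_sqrt hq0.le
  have hsqlt : sq < (2 * (n:ℝ) + 2)⁻¹ := by
    rw [hsqdef]
    exact (Real.sqrt_lt' (by positivity)).2 hqlt
  set Qh : ℝ≥0∞ := ENNReal.ofReal sq with hQhdef
  have hsq1 : sq < 1 := lt_of_lt_of_le hsqlt (by
    rw [inv_le_one_iff₀]; right; linarith)
  have hQh1 : Qh < 1 := by
    rw [hQhdef]
    exact ENNReal.ofReal_lt_one.2 hsq1
  set Q : ℝ≥0∞ := ENNReal.ofReal q with hQdef
  have hQ : Q = Qh * Qh := by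
    rw [hQdef, hQhdef, ← ENNReal.ofReal_mul hsq0, hsqq]
  set ρ : ℝ≥0∞ := ((2 * n + 1 : ℕ) : ℝ≥0∞) * Qh with hρdef
  have hρ1 : ρ < 1 := by
    have h1 : (2 * (n:ℝ) + 1) * sq < 1 := by
      have h2 : (2 * (n:ℝ) + 1) * sq ≤ (2 * (n:ℝ) + 2) * sq := by nlinarith
      have h3 : (2 * (n:ℝ) + 2) * sq < (2 * (n:ℝ) + 2) * (2 * (n:ℝ) + 2)⁻¹ :=
        mul_lt_mul_of_pos_left hsqlt hcpos
      rw [mul_inv_cancel₀ (ne_of_gt hcpos)] at h3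
      linarith
    have h2 : ρ = ENNReal.ofReal ((2 * (n:ℝ) + 1) * sq) := by
      rw [hρdef, ENNReal.ofReal_mul (by positivity), hQhdef]
      congr 1
      rw [← ENNReal.ofReal_natCast]
      congr 1
      push_cast
      ring
    rw [h2]
    exact ENNReal.ofReal_lt_one.2 h1
  have hC : (1 - ρ)⁻¹ ≠ ⊤ := by
    rw [Ne, ENNReal.inv_eq_top, tsub_eq_zero_iff_le]
    exact hρ1.not_ge
  -- probability that a given site is closed
  have hfalse : ∀ z, P (X z ⁻¹' {false}) = Q := by
    intro z
    have h1 : X z ⁻¹' {false} = (X z ⁻¹' {true})ᶜ := by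
      ext ω
      simp [Set.mem_preimage]
    have h2 : P (X z ⁻¹' {true}) = ENNReal.ofReal p := hdist z
    rw [h1, prob_compl_eq_one_sub ((hXmeas z) (measurableSet_singleton true)), h2,
      hQdef, hqdef, ENNReal.ofReal_sub _ hp0.le, ENNReal.ofReal_one]
  -- independence: probability that a finite set of sites is all closed
  have hprod : ∀ S : Finset (Site n), P (⋂ z ∈ S, X z ⁻¹' {false}) = Q ^ S.card := by
    intro S
    rw [hindep.measure_inter_preimage_eq_mul S
      (sets := fun _ => ({false} : Set Bool)) (fun i _ => measurableSet_singleton false),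
      Finset.prod_congr rfl (fun z _ => hfalse z), Finset.prod_const]
  -- key estimate
  have key : ∀ (x : Pt n) (k : ℕ),
      P {ω | Reach (fun z => X z ω) x (k : ℤ)} ≤ (1 - ρ)⁻¹ * Qh ^ k := by
    intro x k
    have hsub : {ω | Reach (fun z => X z ω) x (k : ℤ)} ⊆
        ⋃ s : {s : List (Step n) // (run x (k:ℤ) s).2 ≤ 0 ∧ (downs x (k:ℤ) s).Nodup},
          ⋂ z ∈ (downs x (k:ℤ) s.1).toFinset, X z ⁻¹' {false} := by
      intro ω hω
      obtain ⟨s, h1, h2, h3⟩ := exists_nodup_witness hω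
      refine Set.mem_iUnion.2 ⟨⟨s, h1, h2⟩, ?_⟩
      simp only [Set.mem_iInter, Set.mem_preimage, Set.mem_singleton_iff, List.mem_toFinset]
      exact fun z hz => h3 z hz
    calc P {ω | Reach (fun z => X z ω) x (k : ℤ)}
        ≤ ∑' s : {s : List (Step n) // (run x (k:ℤ) s).2 ≤ 0 ∧ (downs x (k:ℤ) s).Nodup},
            P (⋂ z ∈ (downs x (k:ℤ) s.1).toFinset, X z ⁻¹' {false}) :=
          (measure_mono hsub).trans (measure_iUnion_le _)
      _ ≤ ∑' s : {s : List (Step n) // (run x (k:ℤ) s).2 ≤ 0 ∧ (downs x (k:ℤ) s).Nodup},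
            Qh ^ (s.1.length + k) := by
          apply ENNReal.tsum_le_tsum
          intro s
          rw [hprod, List.toFinset_card_of_nodup s.2.2, hQ, ← pow_two, ← pow_mul]
          apply pow_le_pow_of_le_one zero_le hQh1.le
          have hr := run_snd x (k:ℤ) s.1
          have h1 := s.2.1
          omega
      _ ≤ ∑' s : List (Step n), Qh ^ (s.length + k) :=
          ENNReal.summable.tsum_le_tsum_of_inj (Subtype.val) Subtype.val_injective (fun _ _ => zero_le)
            (fun s => le_rfl) ENNReal.summable
      _ = ∑' σ : (Σ m : ℕ, Fin m → Step n), Qh ^ (σ.1 + k) :=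
          (List.equivSigmaTuple (α := Step n)).tsum_eq
            (f := fun σ : Σ m : ℕ, Fin m → Step n => Qh ^ (σ.1 + k)) |>.symm.symm
      _ = ∑' m : ℕ, ∑' _v : Fin m → Step n, Qh ^ (m + k) := ENNReal.tsum_sigma' _
      _ = ∑' m : ℕ, (Fintype.card (Fin m → Step n)) * Qh ^ (m + k) := by
          congr 1
          funext m
          rw [tsum_fintype, Finset.sum_const, Finset.card_univ, nsmul_eq_mul]
      _ = ∑' m : ℕ, ρ ^ m * Qh ^ k := by
          congr 1
          funext m
          have hcard : Fintype.card (Fin m → Step n) = (2 * n + 1) ^ m := by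
            rw [Fintype.card_fun]
            simp [Fintype.card_option, Fintype.card_prod, mul_comm]
          rw [hcard, pow_add, hρdef, mul_pow]
          push_cast
          ring
      _ = (1 - ρ)⁻¹ * Qh ^ k := by
          rw [ENNReal.tsum_mul_right, ENNReal.tsum_geometric]
  -- the bad event has probability zero
  have hA : ∀ x : Pt n, P (⋂ k : ℕ, {ω | Reach (fun z => X z ω) x (k:ℤ)}) = 0 := by
    intro x
    have hle : ∀ k : ℕ, P (⋂ k : ℕ, {ω | Reach (fun z => X z ω) x (k:ℤ)})
        ≤ (1 - ρ)⁻¹ * Qh ^ k :=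
      fun k => (measure_mono (Set.iInter_subset _ k)).trans (key x k)
    have htend : Filter.Tendsto (fun k : ℕ => (1 - ρ)⁻¹ * Qh ^ k)
        Filter.atTop (nhds 0) := by
      have h1 := ENNReal.Tendsto.const_mul
        (ENNReal.tendsto_pow_atTop_nhds_zero_of_lt_one hQh1) (Or.inr hC)
      simpa using h1
    exact le_zero_iff.1 (ge_of_tendsto' htend hle)
  have hN : P (⋃ x : Pt n, ⋂ k : ℕ, {ω | Reach (fun z => X z ω) x (k:ℤ)}) = 0 :=
    measure_iUnion_null hA
  have hae : ∀ᵐ ω ∂P, ω ∉ ⋃ x : Pt n, ⋂ k : ℕ, {ω' | Reach (fun z => X z ω') x (k:ℤ)} :=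
    measure_eq_zero_iff_ae_notMem.1 hN
  filter_upwards [hae] with ω hω
  have hx : ∀ x : Pt n, ∃ k : ℕ, ¬ Reach (fun z => X z ω) x (k : ℤ) := by
    intro x
    by_contra hcon
    push_neg at hcon
    exact hω (Set.mem_iUnion.2 ⟨x, Set.mem_iInter.2 fun k => hcon k⟩)
  refine ⟨fun x => Nat.find (hx x), ?_, ?_⟩
  · intro x
    by_contra hopen
    have hcl : X (x, (Nat.find (hx x) : ℤ)) ω = false := by
      cases hval : X (x, (Nat.find (hx x) : ℤ)) ω
      · rfl
      · exact absurd hval hopen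
    have hreach : Reach (fun z => X z ω) x (Nat.find (hx x) : ℤ) := by
      rcases Nat.eq_zero_or_pos (Nat.find (hx x)) with h0 | h0
      · exact Reach.base x _ (by simp [h0])
      · have hprev : Reach (fun z => X z ω) x ((Nat.find (hx x) - 1 : ℕ) : ℤ) := by
          by_contra hc
          have := Nat.find_le (h := hx x) hc
          omega
        have hcast : ((Nat.find (hx x) - 1 : ℕ) : ℤ) = (Nat.find (hx x) : ℤ) - 1 := by
          omega
        rw [hcast] at hprev
        exact Reach.down x _ hcl hprev
    exact Nat.find_spec (hx x) hreach
  · intro x y hnb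
    have hsym : (∑ i, (y i - x i).natAbs) = 1 := by
      rw [Finset.sum_congr rfl
        (fun i _ => show (y i - x i).natAbs = (x i - y i).natAbs by omega)]
      exact hnb
    have h1 : Nat.find (hx y) ≤ Nat.find (hx x) + 1 := by
      apply Nat.find_le
      intro hR
      apply Nat.find_spec (hx x)
      apply Reach.up x y (Nat.find (hx x) : ℤ) hsym
      have hcast : ((Nat.find (hx x) + 1 : ℕ) : ℤ) = (Nat.find (hx x) : ℤ) + 1 := by omega
      rwa [hcast] at hR
    have h2 : Nat.find (hx x) ≤ Nat.find (hx y) + 1 := by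
      apply Nat.find_le
      intro hR
      apply Nat.find_spec (hx y)
      apply Reach.up y x (Nat.find (hx y) : ℤ) hnb
      have hcast : ((Nat.find (hx y) + 1 : ℕ) : ℤ) = (Nat.find (hx y) : ℤ) + 1 := by omega
      rwa [hcast] at hR
    beta_reduce
    rw [abs_le]
    constructor <;> omega
end

section
/- Fix n ≥ 1 and 0 < r_in. Define g(r_out, c) = (( (r_out−r_in)^{2n−2}·r_out^{2n} )/( (r_out^n−(r_out−r_in)^n)²·c²·r_in^{2n−2} ) − 1)^{−1/2} for r_out > r_in and c > 0 small enough that the expression under the root is positive. Then there exists C₂ > 0 and c₀ > 0 such that g(r_out, c) ≤ C₂·c for all 0 < c ≤ c₀ and all r_out ≥ 2r_in. -/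
theorem stmt_16 (n : ℕ) (hn : 1 ≤ n) (r_in : ℝ) (hrin : 0 < r_in) :
    ∃ C₂ c₀ : ℝ, 0 < C₂ ∧ 0 < c₀ ∧
      ∀ c r_out : ℝ, 0 < c → c ≤ c₀ → 2 * r_in ≤ r_out →
        0 < (r_out - r_in) ^ (2 * n - 2) * r_out ^ (2 * n) /
              ((r_out ^ n - (r_out - r_in) ^ n) ^ 2 * c ^ 2 * r_in ^ (2 * n - 2)) - 1 ∧
        1 / Real.sqrt ((r_out - r_in) ^ (2 * n - 2) * r_out ^ (2 * n) /
              ((r_out ^ n - (r_out - r_in) ^ n) ^ 2 * c ^ 2 * r_in ^ (2 * n - 2)) - 1)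
          ≤ C₂ * c := by
  refine ⟨2, 1/2, by norm_num, by norm_num, ?_⟩
  intro c r_out hc hcle hr
  have hs : r_in ≤ r_out - r_in := by linarith
  have hs0 : 0 < r_out - r_in := lt_of_lt_of_le hrin hs
  have hro : 0 < r_out := by linarith
  have hsr : r_out - r_in < r_out := by linarith
  have hpow : (r_out - r_in) ^ n < r_out ^ n :=
    pow_lt_pow_left₀ hsr hs0.le (Nat.one_le_iff_ne_zero.mp hn)
  have h1 : 0 < r_out ^ n - (r_out - r_in) ^ n := sub_pos.mpr hpow
  have hsn : 0 < (r_out - r_in) ^ n := pow_pos hs0 n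
  have h2 : (r_out ^ n - (r_out - r_in) ^ n) ^ 2 ≤ r_out ^ (2 * n) := by
    have hle : r_out ^ n - (r_out - r_in) ^ n ≤ r_out ^ n := by linarith
    calc (r_out ^ n - (r_out - r_in) ^ n) ^ 2 ≤ (r_out ^ n) ^ 2 :=
          pow_le_pow_left₀ h1.le hle 2
      _ = r_out ^ (2 * n) := by rw [← pow_mul, mul_comm]
  have h3 : r_in ^ (2 * n - 2) ≤ (r_out - r_in) ^ (2 * n - 2) :=
    pow_le_pow_left₀ hrin.le hs _
  set N := (r_out - r_in) ^ (2 * n - 2) * r_out ^ (2 * n) with hN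
  set D := (r_out ^ n - (r_out - r_in) ^ n) ^ 2 * c ^ 2 * r_in ^ (2 * n - 2) with hD
  have hDpos : 0 < D := by positivity
  have hNpos : 0 < N := by positivity
  have hrinpow : 0 < r_in ^ (2 * n - 2) := pow_pos hrin _
  have hroutpow : 0 < r_out ^ (2 * n) := pow_pos hro _
  have hkey : D ≤ c ^ 2 * N := by
    rw [hD, hN]
    have := mul_le_mul h2 h3 hrinpow.le hroutpow.le
    nlinarith [sq_nonneg c]
  have hR : 1 / c ^ 2 ≤ N / D := by
    rw [div_le_div_iff₀ (by positivity) hDpos]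
    nlinarith
  have hcsq : c ^ 2 ≤ 1 / 4 := by nlinarith
  have h4 : (1 / (2 * c)) ^ 2 ≤ N / D - 1 := by
    have : (1 / (2 * c)) ^ 2 = 1 / (4 * c ^ 2) := by
      field_simp; ring
    rw [this]
    have h5 : 1 / (4 * c ^ 2) + 1 ≤ 1 / c ^ 2 := by
      rw [div_add' _ _ _ (by positivity), div_le_div_iff₀ (by positivity) (by positivity)]
      nlinarith
    linarith
  have hpos : 0 < N / D - 1 := lt_of_lt_of_le (by positivity) h4
  refine ⟨hpos, ?_⟩
  have h6 : 1 / (2 * c) ≤ Real.sqrt (N / D - 1) := by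
    have := Real.sqrt_le_sqrt h4
    rwa [Real.sqrt_sq (by positivity)] at this
  have h7 : 1 / Real.sqrt (N / D - 1) ≤ 1 / (1 / (2 * c)) :=
    one_div_le_one_div_of_le (by positivity) h6
  rwa [one_div_one_div] at h7
end
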